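/- For every finite, simple, connected, undirected graph G: if the cop number c(G) equals 1, then the concurrent cop number c̃(G) equals 1; moreover there is a memoryless randomized cop strategy under which, for every initial position and every robber strategy in the concurrent game, capture occurs with probability one. -/

import Mathlib

open Finset Filter

noncomputable section

variable {V : Type*} [Fintype V] [DecidableEq V]

/-- The closed neighborhood `N[u]` of a vertex `u`: `u` together with its neighbors. -/
def nbhd (G : SimpleGraph V) [DecidableRel G.Adj] (u : V) : Finset V :=
  insert u (G.neighborFinset u)

lemma nbhd_nonempty (G : SimpleGraph V) [DecidableRel G.Adj] (u : V) :
    (nbhd G u).Nonempty :=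
  ⟨u, Finset.mem_insert_self u _⟩

/-! ### The turn-based cops and robber game (TBCR) with `K` cops -/

/-- A position of the `K`-cop game: the cops' locations and the robber's location. -/
abbrev PosK (V : Type*) (K : ℕ) := (Fin K → V) × V

/-- A (deterministic, history-dependent) cop strategy for TBCR: an initial placement
of the `K` cops, and a move function from histories of completed rounds. -/
abbrev TBCop (V : Type*) (K : ℕ) := (Fin K → V) × (List (PosK V K) → Fin K → V)

/-- A (deterministic, history-dependent) robber strategy for TBCR: an initial placement
(seeing the cops' placement), and a move function from histories of completed rounds
together with the cops' fresh move (the cop player moves first in each round). -/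
abbrev TBRob (V : Type*) (K : ℕ) := ((Fin K → V) → V) × (List (PosK V K) → (Fin K → V) → V)

/-- The history of completed rounds of TBCR after round `t`; each token must move within its
closed neighborhood (attempted illegal moves leave the token in place). -/
def tbPlay (G : SimpleGraph V) [DecidableRel G.Adj] {K : ℕ}
    (sc : TBCop V K) (sr : TBRob V K) : ℕ → List (PosK V K)
  | 0 => [(sc.1, sr.1 sc.1)]
  | (t+1) =>
    let h := tbPlay G sc sr t
    let p := h.getLast?.getD (sc.1, sr.1 sc.1)
    let c' : Fin K → V := fun i => if sc.2 h i ∈ nbhd G (p.1 i) then sc.2 h i else p.1 i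
    let w := sr.2 h c'
    h ++ [(c', if w ∈ nbhd G p.2 then w else p.2)]

/-- The position of the TBCR game at the end of round `t`. -/
def tbPos (G : SimpleGraph V) [DecidableRel G.Adj] {K : ℕ}
    (sc : TBCop V K) (sr : TBRob V K) (t : ℕ) : PosK V K :=
  (tbPlay G sc sr t).getLast?.getD (sc.1, sr.1 sc.1)

/-- The robber is captured in TBCR: at some time a cop occupies the robber's current
vertex (either at the end of a round, or just after the cops' half of a round). -/
def tbCaptured (G : SimpleGraph V) [DecidableRel G.Adj] {K : ℕ}
    (sc : TBCop V K) (sr : TBRob V K) : Prop :=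
  ∃ t : ℕ, ∃ i : Fin K,
    (tbPos G sc sr t).1 i = (tbPos G sc sr t).2 ∨
    (tbPos G sc sr (t+1)).1 i = (tbPos G sc sr t).2

/-- `K` cops suffice in the turn-based game: the cop player has a strategy guaranteeing
capture against every robber strategy. -/
def tbCopWin (G : SimpleGraph V) [DecidableRel G.Adj] (K : ℕ) : Prop :=
  ∃ sc : TBCop V K, ∀ sr : TBRob V K, tbCaptured G sc sr

/-- The cop number `c(G)`: the minimum `K` for which the cop player wins TBCR. -/
def copNumber (G : SimpleGraph V) [DecidableRel G.Adj] : ℕ :=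
  sInf {K | tbCopWin G K}

/-! ### The concurrent cops and robber game (CCCR) with `K` cops -/

/-- A randomized cop strategy in CCCR: to each finite history it assigns a probability
distribution over the cops' next moves. -/
abbrev CCCop (V : Type*) (K : ℕ) := List (PosK V K) → PMF (Fin K → V)

/-- A randomized robber strategy in CCCR. -/
abbrev CCRob (V : Type*) (K : ℕ) := List (PosK V K) → PMF V

/-- A strategy is memoryless if the distribution it assigns depends only on the
current (i.e. most recent) position. -/
def MemorylessK {K : ℕ} (π : List (PosK V K) → PMF (Fin K → V)) : Prop :=
  ∀ h₁ h₂ : List (PosK V K), h₁.getLast? = h₂.getLast? → π h₁ = π h₂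

/-- The CCCR transition function for `K` cops: both players move simultaneously, each
token within its closed neighborhood (illegal moves are ignored); a capture position is
absorbing; if a cop and the robber swap adjacent vertices, the robber is captured
\"en passant\". -/
def ccStep (G : SimpleGraph V) [DecidableRel G.Adj] {K : ℕ}
    (p : PosK V K) (u : Fin K → V) (w : V) : PosK V K :=
  if ∃ i, p.1 i = p.2 then p
  else
    let u' : Fin K → V := fun i => if u i ∈ nbhd G (p.1 i) then u i else p.1 i
    let w' : V := if w ∈ nbhd G p.2 then w else p.2
    if ∃ i, u' i = p.2 ∧ w' = p.1 i then (u', p.2) else (u', w')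

/-- The distribution over histories of the first `t+1` positions of CCCR, induced by a
pair of randomized strategies and an initial position. -/
def ccPlay (G : SimpleGraph V) [DecidableRel G.Adj] {K : ℕ}
    (πC : CCCop V K) (πR : CCRob V K) (init : PosK V K) : ℕ → PMF (List (PosK V K))
  | 0 => PMF.pure [init]
  | (t+1) => (ccPlay G πC πR init t).bind fun h =>
      (πC h).bind fun u => (πR h).bind fun w =>
        PMF.pure (h ++ [ccStep G (h.getLast?.getD init) u w])

/-- The probability that the robber is still free (not captured) after round `t`. -/
def ccFreeProb (G : SimpleGraph V) [DecidableRel G.Adj] {K : ℕ}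
    (πC : CCCop V K) (πR : CCRob V K) (init : PosK V K) (t : ℕ) : ENNReal :=
  (ccPlay G πC πR init t).toOuterMeasure
    {h | ∀ i, (h.getLast?.getD init).1 i ≠ (h.getLast?.getD init).2}

/-- `K` cops suffice in the concurrent game: the cop player has a strategy ensuring
that, from every initial position and against every robber strategy, capture occurs
with probability one (the set of infinite histories avoiding capture has probability
zero). -/
def ccCopWin (G : SimpleGraph V) [DecidableRel G.Adj] (K : ℕ) : Prop :=
  ∃ πC : CCCop V K, ∀ init : PosK V K, ∀ πR : CCRob V K,
    (⨅ t : ℕ, ccFreeProb G πC πR init t) = 0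

/-- The concurrent cop number `c̃(G)`. -/
def ccopNumber (G : SimpleGraph V) [DecidableRel G.Adj] : ℕ :=
  sInf {K | ccCopWin G K}
namespace CCAux

open scoped Classical

variable (G : SimpleGraph V) [DecidableRel G.Adj]

lemma mem_nbhd {x y : V} : y ∈ nbhd G x ↔ y = x ∨ G.Adj x y := by
  simp [nbhd, SimpleGraph.mem_neighborFinset, eq_comm]

lemma self_mem_nbhd (x : V) : x ∈ nbhd G x := Finset.mem_insert_self _ _

lemma nbhd_symm {x y : V} (h : y ∈ nbhd G x) : x ∈ nbhd G y := by
  rcases (mem_nbhd G).1 h with h | h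
  · subst h; exact self_mem_nbhd G y
  · exact (mem_nbhd G).2 (Or.inr h.symm)

/-- `n`-step winnability of the turn-based game restricted to `A` (cop moves first). -/
def Pn (A : Finset V) : ℕ → V → V → Prop
  | 0 => fun c r => c = r
  | n+1 => fun c r => c = r ∨ ∃ c', (c' ∈ nbhd G c ∧ c' ∈ A) ∧
      (c' = r ∨ ∀ w, w ∈ nbhd G r ∧ w ∈ A → Pn A n c' w)

lemma Pn_mono (A : Finset V) : ∀ n c r, Pn G A n c r → Pn G A (n+1) c r := by
  intro n
  induction n with
  | zero => intro c r h; exact Or.inl h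
  | succ n ih =>
    intro c r h
    rcases h with h | ⟨c', hc', h⟩
    · exact Or.inl h
    · refine Or.inr ⟨c', hc', ?_⟩
      rcases h with h | h
      · exact Or.inl h
      · exact Or.inr fun w hw => ih _ _ (h w hw)

lemma Pn_le_mono (A : Finset V) {n m : ℕ} (hnm : n ≤ m) {c r : V}
    (h : Pn G A n c r) : Pn G A m c r := by
  induction hnm with
  | refl => exact h
  | step _ ih => exact Pn_mono G A _ _ _ ih

/-- Turn-based evadability closure: from a position with no finite cop value, after any cop
move the robber has a response keeping no finite cop value. -/
lemma closure {A : Finset V} {c r : V} (hr : r ∈ A)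
    (h : ¬ ∃ n, Pn G A n c r) :
    c ≠ r ∧ ∀ u, u ∈ nbhd G c → u ∈ A →
      u ≠ r ∧ ∃ w, (w ∈ nbhd G r ∧ w ∈ A) ∧ ¬ ∃ n, Pn G A n u w := by
  constructor
  · intro hcr; exact h ⟨0, hcr⟩
  · intro u hu huA
    constructor
    · intro hur
      exact h ⟨1, Or.inr ⟨u, ⟨hu, huA⟩, Or.inl hur⟩⟩
    · by_contra hcon
      push_neg at hcon
      -- every legal robber reply has a finite value against `u`
      set S : Finset V := (nbhd G r).filter (· ∈ A) with hS
      set f : V → ℕ := fun w => if hw : ∃ n, Pn G A n u w then Nat.find hw else 0 with hf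
      set N : ℕ := S.sup f with hN
      apply h
      refine ⟨N + 1, Or.inr ⟨u, ⟨hu, huA⟩, Or.inr ?_⟩⟩
      intro w hw
      have hwS : w ∈ S := Finset.mem_filter.2 ⟨hw.1, hw.2⟩
      have hex : ∃ n, Pn G A n u w := hcon w ⟨hw.1, hw.2⟩
      have h1 : Pn G A (f w) u w := by
        rw [hf]; simp only [dif_pos hex]; exact Nat.find_spec hex
      exact Pn_le_mono G A (Finset.le_sup (f := f) hwS) h1

/-- From a winning turn-based cop strategy: every robber position has finite value
against the cop's initial vertex (on `A = univ`). -/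
lemma tot_univ (sc : TBCop V 1) (hwin : ∀ sr : TBRob V 1, tbCaptured G sc sr) :
    ∀ r : V, ∃ n, Pn G Finset.univ n (sc.1 0) r := by
  by_contra hcon
  push_neg at hcon
  obtain ⟨r₀, hr₀⟩ := hcon
  -- the evading robber strategy
  set Q : V → V → Prop := fun c r => ∃ n, Pn G Finset.univ n c r with hQ
  set esc : PosK V 1 → V → V := fun p u =>
    if h : ∃ w, (w ∈ nbhd G p.2 ∧ w ∈ (Finset.univ : Finset V)) ∧ ¬ Q u w
    then h.choose else p.2 with hesc
  set sr : TBRob V 1 :=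
    (fun _ => r₀, fun h c' => esc (h.getLast?.getD (sc.1, r₀)) (c' 0)) with hsr
  have hplay : ∀ t, tbPlay G sc sr t ≠ [] ∧
      (tbPlay G sc sr t).getLast?.getD (sc.1, sr.1 sc.1) = tbPos G sc sr t := by
    intro t
    constructor
    · cases t with
      | zero => simp [tbPlay]
      | succ t => simp [tbPlay]
    · rfl
  -- one-step unfolding of the play
  have hstep : ∀ t, tbPos G sc sr (t+1) =
      (fun i => if sc.2 (tbPlay G sc sr t) i ∈ nbhd G ((tbPos G sc sr t).1 i)
          then sc.2 (tbPlay G sc sr t) i else (tbPos G sc sr t).1 i,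
        if sr.2 (tbPlay G sc sr t) (fun i =>
            if sc.2 (tbPlay G sc sr t) i ∈ nbhd G ((tbPos G sc sr t).1 i)
            then sc.2 (tbPlay G sc sr t) i else (tbPos G sc sr t).1 i) ∈
            nbhd G (tbPos G sc sr t).2
        then sr.2 (tbPlay G sc sr t) (fun i =>
            if sc.2 (tbPlay G sc sr t) i ∈ nbhd G ((tbPos G sc sr t).1 i)
            then sc.2 (tbPlay G sc sr t) i else (tbPos G sc sr t).1 i)
        else (tbPos G sc sr t).2) := by
    intro t
    show (tbPlay G sc sr (t+1)).getLast?.getD (sc.1, sr.1 sc.1) = _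
    rw [show tbPlay G sc sr (t+1) = tbPlay G sc sr t ++ [_] from rfl]
    rw [List.getLast?_concat]
    rfl
  -- the invariant
  have hinv : ∀ t, ¬ Q ((tbPos G sc sr t).1 0) (tbPos G sc sr t).2 ∧
      ((tbPos G sc sr (t+1)).1 0 ∈ nbhd G ((tbPos G sc sr t).1 0)) := by
    intro t
    induction t with
    | zero =>
      constructor
      · have h0 : tbPos G sc sr 0 = (sc.1, r₀) := by
          simp [tbPos, tbPlay, hsr]
        rw [h0]
        simp only [hQ, not_exists]
        exact hr₀
      · rw [hstep 0]
        dsimp only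
        split_ifs with hmem
        · exact hmem
        · exact self_mem_nbhd G _
    | succ t ih =>
      obtain ⟨ihQ, ihmem⟩ := ih
      have hmem2 : ∀ s, (tbPos G sc sr (s+1)).1 0 ∈ nbhd G ((tbPos G sc sr s).1 0) := by
        intro s
        rw [hstep s]
        dsimp only
        split_ifs with hmem
        · exact hmem
        · exact self_mem_nbhd G _
      refine ⟨?_, hmem2 (t+1)⟩
      set cm : V := if sc.2 (tbPlay G sc sr t) 0 ∈ nbhd G ((tbPos G sc sr t).1 0)
          then sc.2 (tbPlay G sc sr t) 0 else (tbPos G sc sr t).1 0 with hcm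
      have hC0 : (tbPos G sc sr (t+1)).1 0 = cm := by rw [hstep t]
      have hcl := (closure G (A := Finset.univ) (Finset.mem_univ (tbPos G sc sr t).2) ihQ).2
        ((tbPos G sc sr (t+1)).1 0) ihmem (Finset.mem_univ _)
      have hcond : ∃ w, (w ∈ nbhd G (tbPos G sc sr t).2 ∧ w ∈ (Finset.univ : Finset V)) ∧
          ¬ Q ((tbPos G sc sr (t+1)).1 0) w := hcl.2
      have hescval : esc (tbPos G sc sr t) ((tbPos G sc sr (t+1)).1 0) = hcond.choose := by
        rw [hesc]
        exact dif_pos hcond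
      have hspec := hcond.choose_spec
      have hpos2 : (tbPos G sc sr (t+1)).2 = hcond.choose := by
        conv_lhs => rw [hstep t]
        show (if esc (tbPos G sc sr t) cm ∈ nbhd G (tbPos G sc sr t).2
          then esc (tbPos G sc sr t) cm else (tbPos G sc sr t).2) = hcond.choose
        rw [← hC0, hescval, if_pos hspec.1.1]
      rw [hpos2]
      exact hspec.2
  -- derive a contradiction from the winning strategy
  obtain ⟨t, i, hcap⟩ := hwin sr
  have hi : i = 0 := Subsingleton.elim i 0
  subst hi
  rcases hcap with hcap | hcap
  · exact (hinv t).1 ⟨0, hcap⟩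
  · exact ((closure G (A := Finset.univ) (Finset.mem_univ (tbPos G sc sr t).2)
      (hinv t).1).2 ((tbPos G sc sr (t+1)).1 0) (hinv t).2 (Finset.mem_univ _)).1 hcap

end CCAux
namespace CCAux

variable (G : SimpleGraph V) [DecidableRel G.Adj]

/-- `v` is a corner of `A`, dominated by `u`. -/
def IsCorner (A : Finset V) (v u : V) : Prop :=
  v ∈ A ∧ u ∈ A ∧ v ≠ u ∧ ∀ w, w ∈ nbhd G v → w ∈ A → w ∈ nbhd G u

/-- Dismantlability of a set of vertices. -/
inductive Dism : Finset V → Prop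
  | single (z : V) : Dism {z}
  | step {A : Finset V} (v u : V) (hc : IsCorner G A v u) (hd : Dism (A.erase v)) : Dism A

/-- The retraction collapsing `v` onto `u`. -/
def ret (v u : V) (x : V) : V := if x = v then u else x

lemma ret_hom {A : Finset V} {v u : V} (hc : IsCorner G A v u) {c x : V}
    (hcA : c ∈ A) (hx : x ∈ nbhd G c) (hxA : x ∈ A) :
    ret v u x ∈ nbhd G (ret v u c) ∧ ret v u x ∈ A.erase v := by
  obtain ⟨hvA, huA, hvu, hdom⟩ := hc
  constructor
  · show (if x = v then u else x) ∈ nbhd G (if c = v then u else c)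
    by_cases hxv : x = v
    · by_cases hcv : c = v
      · rw [if_pos hxv, if_pos hcv]; exact self_mem_nbhd G u
      · rw [if_pos hxv, if_neg hcv]
        rw [hxv] at hx
        exact nbhd_symm G (hdom c (nbhd_symm G hx) hcA)
    · by_cases hcv : c = v
      · rw [if_neg hxv, if_pos hcv]
        rw [hcv] at hx
        exact hdom x hx hxA
      · rw [if_neg hxv, if_neg hcv]; exact hx
  · show (if x = v then u else x) ∈ A.erase v
    by_cases hxv : x = v
    · rw [if_pos hxv]
      exact Finset.mem_erase.2 ⟨Ne.symm hvu, huA⟩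
    · rw [if_neg hxv]
      exact Finset.mem_erase.2 ⟨hxv, hxA⟩

lemma ret_mem {A : Finset V} {v u : V} (hc : IsCorner G A v u) {c : V} (hcA : c ∈ A) :
    ret v u c ∈ A.erase v := by
  by_cases hcv : c = v
  · subst hcv; simp only [ret, if_pos rfl]
    exact Finset.mem_erase.2 ⟨Ne.symm hc.2.2.1, hc.2.1⟩
  · simp only [ret, if_neg hcv]
    exact Finset.mem_erase.2 ⟨hcv, hcA⟩

/-- Projection of the value function to the graph with a corner removed. -/
lemma proj {A : Finset V} {v u : V} (hc : IsCorner G A v u) :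
    ∀ n c r, c ∈ A → r ∈ A.erase v → Pn G A n c r → Pn G (A.erase v) n (ret v u c) r := by
  intro n
  induction n with
  | zero =>
    intro c r _ hr h
    have : ret v u c = ret v u r := by rw [h]
    rw [this]
    show ret v u r = r
    simp [ret, (Finset.mem_erase.1 hr).1]
  | succ n ih =>
    intro c r hcA hrA h
    rcases h with h | ⟨c', ⟨hc'n, hc'A⟩, h⟩
    · refine Or.inl ?_
      subst h
      simp [ret, (Finset.mem_erase.1 hrA).1]
    · obtain ⟨hd1, hd2⟩ := ret_hom G hc hcA hc'n hc'A
      refine Or.inr ⟨ret v u c', ⟨hd1, hd2⟩, ?_⟩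
      rcases h with h | h
      · subst h
        refine Or.inl ?_
        simp [ret, (Finset.mem_erase.1 hrA).1]
      · refine Or.inr ?_
        intro w hw
        have hwA : w ∈ A := Finset.mem_of_mem_erase hw.2
        exact ih c' w hc'A hw.2 (h w ⟨hw.1, hwA⟩)

/-- If there is no corner, positions with the robber outside the cop's closed
neighborhood have no finite value. -/
lemma no_corner_evade {A : Finset V} (hnc : ∀ v u, ¬ IsCorner G A v u) :
    ∀ n c r, c ∈ A → r ∈ A → r ∉ nbhd G c → ¬ Pn G A n c r := by
  intro n
  induction n with
  | zero =>
    intro c r _ _ hrn h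
    exact hrn (h ▸ self_mem_nbhd G c)
  | succ n ih =>
    intro c r hcA hrA hrn h
    rcases h with h | ⟨c', ⟨hc'n, hc'A⟩, h⟩
    · exact hrn (h ▸ self_mem_nbhd G c)
    · rcases h with h | h
      · exact hrn (h ▸ hc'n)
      · have hne : r ≠ c' := by
          intro he; exact hrn (he ▸ hc'n)
        have := hnc r c'
        simp only [IsCorner, not_and] at this
        have hnotdom := this hrA hc'A hne
        push_neg at hnotdom
        obtain ⟨w, hw1, hw2, hw3⟩ := hnotdom
        exact ih c' w hc'A hw2 hw3 (h w ⟨hw1, hw2⟩)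

/-- From totality of the value at a single cop vertex, a corner exists (if `|A| ≥ 2`). -/
lemma exists_corner {A : Finset V} (hA : 2 ≤ A.card) {c : V} (hcA : c ∈ A)
    (htot : ∀ r ∈ A, ∃ n, Pn G A n c r) : ∃ v u, IsCorner G A v u := by
  by_contra hnc
  push_neg at hnc
  by_cases hall : ∀ r ∈ A, r ∈ nbhd G c
  · -- `c` dominates all of `A`: any other vertex is a corner
    obtain ⟨v, hvA, hvc⟩ : ∃ v ∈ A, v ≠ c := by
      obtain ⟨a, ha, b, hb, hab⟩ := Finset.one_lt_card.1 hA
      by_cases hac : a = c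
      · exact ⟨b, hb, fun hh => hab (by rw [hac, hh])⟩
      · exact ⟨a, ha, hac⟩
    exact hnc v c ⟨hvA, hcA, hvc, fun w _ hwA => hall w hwA⟩
  · push_neg at hall
    obtain ⟨r, hrA, hrn⟩ := hall
    obtain ⟨n, hn⟩ := htot r hrA
    exact no_corner_evade G hnc n c r hcA hrA hrn hn

/-- Totality implies dismantlability. -/
lemma dism_of_tot : ∀ A : Finset V, (∃ c ∈ A, ∀ r ∈ A, ∃ n, Pn G A n c r) → Dism G A := by
  intro A
  induction A using Finset.strongInduction with
  | _ A ih =>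
    intro ⟨c, hcA, htot⟩
    rcases eq_or_lt_of_le (Finset.one_le_card.2 ⟨c, hcA⟩) with h1 | h2
    · obtain ⟨z, hz⟩ := Finset.card_eq_one.1 h1.symm
      rw [hz]; exact Dism.single z
    · obtain ⟨v, u, hcor⟩ := exists_corner G h2 hcA htot
      refine Dism.step v u hcor (ih (A.erase v) (Finset.erase_ssubset hcor.1) ?_)
      refine ⟨ret v u c, ret_mem G hcor hcA, ?_⟩
      intro r hr
      obtain ⟨n, hn⟩ := htot r (Finset.mem_of_mem_erase hr)
      exact ⟨n, proj G hcor n c r hcA hr hn⟩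

/-- A dismantlable set carries a ladder of retractions. -/
lemma ladder_of_dism {A : Finset V} (hd : Dism G A) :
    ∃ (m : ℕ) (σ : ℕ → V → V) (z : V), z ∈ A ∧ (∀ r ∈ A, σ 0 r = z) ∧
      (∀ r ∈ A, σ m r = r) ∧
      (∀ k, k < m → ∀ r ∈ A, ∀ w, w ∈ nbhd G r → w ∈ A → σ (k+1) w ∈ nbhd G (σ k r)) := by
  induction hd with
  | single z =>
    refine ⟨0, fun _ x => z, z, Finset.mem_singleton_self z, fun r _ => rfl, ?_, ?_⟩
    · intro r hr; rw [Finset.mem_singleton.1 hr]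
    · intro k hk; omega
  | @step A v u hcor hd ih =>
    obtain ⟨m, σ, z, hzA, hσ0, hσm, hL1⟩ := ih
    refine ⟨m + 1, fun k x => if k ≤ m then σ k (ret v u x) else x, z,
      Finset.mem_of_mem_erase hzA, ?_, ?_, ?_⟩
    · intro r hrA
      dsimp only
      simp only [if_pos (Nat.zero_le m)]
      exact hσ0 _ (ret_mem G hcor hrA)
    · intro r hrA
      dsimp only
      rw [if_neg (by omega : ¬ m + 1 ≤ m)]
    · intro k hk r hrA w hw hwA
      dsimp only
      rcases Nat.lt_or_ge k m with hkm | hkm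
      · rw [if_pos (Nat.succ_le_of_lt hkm), if_pos (Nat.le_of_lt hkm)]
        obtain ⟨hw1, hw2⟩ := ret_hom G hcor hrA hw hwA
        exact hL1 k hkm (ret v u r) (ret_mem G hcor hrA) (ret v u w) hw1 hw2
      · have hkm' : k = m := by omega
        rw [hkm']
        rw [if_neg (by omega : ¬ m + 1 ≤ m), if_pos (le_refl m)]
        rw [hσm _ (ret_mem G hcor hrA)]
        -- `w ∈ N[ret v u r]`
        show w ∈ nbhd G (if r = v then u else r)
        by_cases hrv : r = v
        · rw [if_pos hrv]
          rw [hrv] at hw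
          exact hcor.2.2.2 w hw hwA
        · rw [if_neg hrv]
          exact hw
  end CCAux
namespace CCAux

open scoped Classical

variable (G : SimpleGraph V) [DecidableRel G.Adj]

/-- The current rung of the ladder: the largest `k ≤ m` with `σ k r = c`. -/
def ell (m : ℕ) (σ : ℕ → V → V) (p : PosK V 1) : ℕ :=
  Nat.findGreatest (fun k => σ k p.2 = p.1 0) m

def onL (m : ℕ) (σ : ℕ → V → V) (p : PosK V 1) : Prop :=
  ∃ k ≤ m, σ k p.2 = p.1 0

/-- The pursuit potential. -/
def psi (m : ℕ) (σ : ℕ → V → V) (z : V) (p : PosK V 1) : ℕ :=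
  if p.1 0 = p.2 then 0
  else if onL m σ p then m + 1 - ell m σ p
  else m + 1 + G.dist (p.1 0) z

/-- The cop's (deterministic) good target, given the robber's effective move `w`. -/
def tgt (m : ℕ) (σ : ℕ → V → V) (st : V → V) (p : PosK V 1) (w : V) : V :=
  if onL m σ p then σ (ell m σ p + 1) w else st (p.1 0)

lemma ell_spec {m : ℕ} {σ : ℕ → V → V} {p : PosK V 1} (hp : onL m σ p) :
    σ (ell m σ p) p.2 = p.1 0 ∧ ell m σ p ≤ m := by
  obtain ⟨k, hk, hσk⟩ := hp
  unfold ell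
  exact ⟨Nat.findGreatest_spec (P := fun k => σ k p.2 = p.1 0) hk hσk,
    Nat.findGreatest_le m⟩

lemma ccStep_eq (p : PosK V 1) (u : Fin 1 → V) (w : V)
    (hfree : p.1 0 ≠ p.2) (hleg : ∀ i, u i ∈ nbhd G (p.1 i)) :
    ccStep G p u w =
      if ∃ i, u i = p.2 ∧ (if w ∈ nbhd G p.2 then w else p.2) = p.1 i
      then (u, p.2) else (u, if w ∈ nbhd G p.2 then w else p.2) := by
  have hnc : ¬ ∃ i, p.1 i = p.2 := by
    rintro ⟨i, hi⟩
    rw [Subsingleton.elim i 0] at hi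
    exact hfree hi
  have hui : ∀ i, (if u i ∈ nbhd G (p.1 i) then u i else p.1 i) = u i :=
    fun i => if_pos (hleg i)
  unfold ccStep
  rw [if_neg hnc]
  simp only [hui]

section Ladder

variable {G}
variable {m : ℕ} {σ : ℕ → V → V} {z : V} {st : V → V}
variable (hσ0 : ∀ r : V, σ 0 r = z) (hσm : ∀ r : V, σ m r = r)
variable (hL1 : ∀ k, k < m → ∀ r w : V, w ∈ nbhd G r → σ (k+1) w ∈ nbhd G (σ k r))
variable (hst : ∀ c : V, c ≠ z → G.Adj c (st c) ∧ G.dist (st c) z < G.dist c z)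

lemma psi_pos {p : PosK V 1} (hfree : p.1 0 ≠ p.2) : 1 ≤ psi G m σ z p := by
  unfold psi
  rw [if_neg hfree]
  split_ifs with h
  · have := (ell_spec h).2
    omega
  · omega

lemma psi_le {p : PosK V 1} :
    psi G m σ z p ≤ m + 1 + Finset.univ.sup (fun c => G.dist c z) := by
  unfold psi
  split_ifs with h1 h2
  · omega
  · omega
  · have : G.dist (p.1 0) z ≤ Finset.univ.sup (fun c => G.dist c z) :=
      Finset.le_sup (f := fun c => G.dist c z) (s := Finset.univ) (b := p.1 0)
        (Finset.mem_univ _)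
    omega

include hσm in
lemma ell_lt {p : PosK V 1} (hfree : p.1 0 ≠ p.2) (h : onL m σ p) : ell m σ p < m := by
  obtain ⟨hσℓ, hℓm⟩ := ell_spec h
  rcases Nat.lt_or_ge (ell m σ p) m with h' | h'
  · exact h'
  · exfalso
    have : ell m σ p = m := le_antisymm hℓm h'
    rw [this, hσm] at hσℓ
    exact hfree hσℓ.symm

include hσ0 hσm hL1 hst in
/-- The key step lemma: the good cop move strictly decreases the potential. -/
lemma good_step (p : PosK V 1) (hfree : p.1 0 ≠ p.2) (w : V) :
    psi G m σ z (ccStep G p (fun _ => tgt m σ st p (if w ∈ nbhd G p.2 then w else p.2)) w)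
      < psi G m σ z p := by
  set w' : V := if w ∈ nbhd G p.2 then w else p.2 with hw'
  have hw'mem : w' ∈ nbhd G p.2 := by
    rw [hw']
    split_ifs with h
    · exact h
    · exact self_mem_nbhd G _
  set T : V := tgt m σ st p w' with hT
  -- legality of the target
  have hleg : ∀ i : Fin 1, T ∈ nbhd G (p.1 i) := by
    intro i
    rw [Subsingleton.elim i 0]
    rw [hT]
    unfold tgt
    split_ifs with h
    · obtain ⟨hσℓ, _⟩ := ell_spec h
      have := hL1 (ell m σ p) (ell_lt hσm hfree h) p.2 w' hw'mem
      rwa [hσℓ] at this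
    · have hcz : p.1 0 ≠ z := by
        intro hcz
        exact h ⟨0, Nat.zero_le m, by rw [hσ0, hcz]⟩
      exact (mem_nbhd G).2 (Or.inr (hst _ hcz).1)
  rw [ccStep_eq G p _ w hfree hleg]
  rw [← hw']
  have hpsipos := psi_pos (G := G) (m := m) (σ := σ) (z := z) hfree
  split_ifs with hE
  · -- en passant: the new position is capture
    obtain ⟨i, hi1, _⟩ := hE
    have hTp : T = p.2 := hi1
    have hcap : ((fun (_ : Fin 1) => T), p.2).1 0 = ((fun (_ : Fin 1) => T), p.2).2 := hTp
    have h0 : psi G m σ z ((fun (_ : Fin 1) => T), p.2) = 0 := by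
      unfold psi
      rw [if_pos hcap]
    omega
  · -- ordinary move
    set q : PosK V 1 := ((fun (_ : Fin 1) => T), w') with hq
    show psi G m σ z q < psi G m σ z p
    by_cases hcapq : q.1 0 = q.2
    · have h0 : psi G m σ z q = 0 := by
        unfold psi; rw [if_pos hcapq]
      omega
    · by_cases honp : onL m σ p
      · -- on the ladder: climb one rung
        set k : ℕ := ell m σ p with hk
        have hkm : k < m := ell_lt hσm hfree honp
        have hTval : T = σ (k+1) w' := by rw [hT]; unfold tgt; rw [if_pos honp]
        have honq : onL m σ q := ⟨k+1, hkm, by rw [hq]; exact hTval.symm⟩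
        have hellq : k + 1 ≤ ell m σ q := Nat.le_findGreatest hkm (by rw [hq]; exact hTval.symm)
        have h1 : psi G m σ z q = m + 1 - ell m σ q := by
          unfold psi; rw [if_neg hcapq, if_pos honq]
        have h2 : psi G m σ z p = m + 1 - k := by
          unfold psi; rw [if_neg hfree, if_pos honp]
        omega
      · -- off the ladder: walk towards z
        have hcz : p.1 0 ≠ z := by
          intro hcz
          exact honp ⟨0, Nat.zero_le m, by rw [hσ0, hcz]⟩
        have hTval : T = st (p.1 0) := by rw [hT]; unfold tgt; rw [if_neg honp]
        have hdistlt : G.dist (st (p.1 0)) z < G.dist (p.1 0) z := (hst _ hcz).2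
        have h2 : psi G m σ z p = m + 1 + G.dist (p.1 0) z := by
          unfold psi; rw [if_neg hfree, if_neg honp]
        by_cases honq : onL m σ q
        · have h1 : psi G m σ z q = m + 1 - ell m σ q := by
            unfold psi; rw [if_neg hcapq, if_pos honq]
          omega
        · have h1 : psi G m σ z q = m + 1 + G.dist (q.1 0) z := by
            unfold psi; rw [if_neg hcapq, if_neg honq]
          have hq1 : q.1 0 = st (p.1 0) := hTval
          rw [hq1] at h1
          omega

end Ladder

end CCAux
namespace CCAux

open scoped Classical ENNReal

lemma pmf_compl {α : Type*} (p : PMF α) (S : Set α) :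
    p.toOuterMeasure S + p.toOuterMeasure Sᶜ = 1 := by
  rw [PMF.toOuterMeasure_apply, PMF.toOuterMeasure_apply, ← ENNReal.tsum_add,
    ← PMF.tsum_coe p]
  refine tsum_congr fun x => ?_
  by_cases hx : x ∈ S
  · rw [Set.indicator_of_mem hx, Set.indicator_of_notMem (by simpa using hx), add_zero]
  · rw [Set.indicator_of_notMem hx, Set.indicator_of_mem (by simpa using hx), zero_add]

variable (G : SimpleGraph V) [DecidableRel G.Adj]

/-- Histories whose current position is a capture. -/
def CapS (init : PosK V 1) : Set (List (PosK V 1)) :=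
  {h | (h.getLast?.getD init).1 0 = (h.getLast?.getD init).2}

/-- Histories whose current position is free with potential at most `B - j`. -/
def LowS (m : ℕ) (σ : ℕ → V → V) (z : V) (init : PosK V 1) (B j : ℕ) :
    Set (List (PosK V 1)) :=
  {h | (h.getLast?.getD init).1 0 ≠ (h.getLast?.getD init).2 ∧
    psi G m σ z (h.getLast?.getD init) + j ≤ B}

section Prob

variable {G}
variable [Nonempty V]
variable {m : ℕ} {σ : ℕ → V → V} {z : V} {st : V → V}
variable (hσ0 : ∀ r : V, σ 0 r = z) (hσm : ∀ r : V, σ m r = r)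
variable (hL1 : ∀ k, k < m → ∀ r w : V, w ∈ nbhd G r → σ (k+1) w ∈ nbhd G (σ k r))
variable (hst : ∀ c : V, c ≠ z → G.Adj c (st c) ∧ G.dist (st c) z < G.dist c z)

/-- The memoryless (constant) uniformly random cop strategy. -/
def unifC : CCCop V 1 := fun _ => PMF.uniformOfFintype (Fin 1 → V)

lemma unifC_apply (h : List (PosK V 1)) (u : Fin 1 → V) :
    unifC h u = (↑(Fintype.card (Fin 1 → V)) : ℝ≥0∞)⁻¹ :=
  PMF.uniformOfFintype_apply u

/-- Measure of a set after one more round, as a sum. -/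
lemma ccPlay_succ_meas (πR : CCRob V 1) (init : PosK V 1) (t : ℕ)
    (S : Set (List (PosK V 1))) :
    (ccPlay G (unifC (V := V)) πR init (t+1)).toOuterMeasure S =
      ∑' h, (ccPlay G (unifC (V := V)) πR init t) h *
        ∑' u, unifC (V := V) h u * ∑' w, πR h w *
          (if (h ++ [ccStep G (h.getLast?.getD init) u w]) ∈ S then 1 else 0) := by
  show ((ccPlay G (unifC (V := V)) πR init t).bind _).toOuterMeasure S = _
  rw [PMF.toOuterMeasure_bind_apply]
  refine tsum_congr fun h => ?_
  congr 1
  rw [PMF.toOuterMeasure_bind_apply]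
  refine tsum_congr fun u => ?_
  congr 1
  rw [PMF.toOuterMeasure_bind_apply]
  refine tsum_congr fun w => ?_
  congr 1
  exact PMF.toOuterMeasure_pure_apply _ _

/-- If every possible next history lies in `S`, the inner measure is ≥ 1. -/
lemma inner_all {πR : CCRob V 1} {init : PosK V 1} {h : List (PosK V 1)}
    {S : Set (List (PosK V 1))}
    (hall : ∀ (u : Fin 1 → V) (w : V), h ++ [ccStep G (h.getLast?.getD init) u w] ∈ S) :
    (1 : ℝ≥0∞) ≤ ∑' u, unifC (V := V) h u * ∑' w, πR h w *
      (if (h ++ [ccStep G (h.getLast?.getD init) u w]) ∈ S then 1 else 0) := by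
  have hw : ∀ u : Fin 1 → V, ∑' w, πR h w *
      (if (h ++ [ccStep G (h.getLast?.getD init) u w]) ∈ S then 1 else 0) = 1 := by
    intro u
    have : ∀ w, πR h w * (if (h ++ [ccStep G (h.getLast?.getD init) u w]) ∈ S
        then (1:ℝ≥0∞) else 0) = πR h w := by
      intro w
      rw [if_pos (hall u w), mul_one]
    rw [tsum_congr this, PMF.tsum_coe]
  refine le_of_eq ?_
  calc (1 : ℝ≥0∞) = ∑' u, unifC (V := V) h u := (PMF.tsum_coe _).symm
    _ = ∑' u, unifC (V := V) h u * ∑' w, πR h w *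
        (if (h ++ [ccStep G (h.getLast?.getD init) u w]) ∈ S then 1 else 0) := by
      refine tsum_congr fun u => ?_
      rw [hw u, mul_one]

include hσ0 hσm hL1 hst in
/-- The good cop draw: from a free position, with probability at least `N⁻¹` the next
position is captured or has strictly smaller potential. -/
lemma inner_good {πR : CCRob V 1} {init : PosK V 1} {h : List (PosK V 1)} {B j : ℕ}
    (hfree : (h.getLast?.getD init).1 0 ≠ (h.getLast?.getD init).2)
    (hlow : psi G m σ z (h.getLast?.getD init) + j ≤ B) :
    (↑(Fintype.card (Fin 1 → V)) : ℝ≥0∞)⁻¹ ≤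
      ∑' u, unifC (V := V) h u * ∑' w, πR h w *
        (if (h ++ [ccStep G (h.getLast?.getD init) u w]) ∈
          (CapS init ∪ LowS G m σ z init B (j+1)) then 1 else 0) := by
  set p : PosK V 1 := h.getLast?.getD init with hp
  set N : ℝ≥0∞ := (↑(Fintype.card (Fin 1 → V)) : ℝ≥0∞) with hN
  set gu : V → (Fin 1 → V) := fun w => fun _ => tgt m σ st p (if w ∈ nbhd G p.2 then w else p.2)
    with hgu
  have hmem : ∀ w : V, (h ++ [ccStep G p (gu w) w]) ∈
      (CapS init ∪ LowS G m σ z init B (j+1)) := by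
    intro w
    have hgood : psi G m σ z (ccStep G p (gu w) w) < psi G m σ z p :=
      good_step hσ0 hσm hL1 hst p hfree w
    have hpos : (h ++ [ccStep G p (gu w) w]).getLast?.getD init = ccStep G p (gu w) w := by
      rw [List.getLast?_concat]
      rfl
    by_cases hcap : (ccStep G p (gu w) w).1 0 = (ccStep G p (gu w) w).2
    · left
      show ((h ++ [ccStep G p (gu w) w]).getLast?.getD init).1 0 = _
      rw [hpos]
      exact hcap
    · right
      refine ⟨by rw [hpos]; exact hcap, ?_⟩
      rw [hpos]
      omega
  calc N⁻¹ = ∑' w, N⁻¹ * πR h w := by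
        rw [ENNReal.tsum_mul_left, PMF.tsum_coe, mul_one]
    _ ≤ ∑' w, ∑' u, unifC (V := V) h u * (πR h w *
        (if (h ++ [ccStep G p u w]) ∈
          (CapS init ∪ LowS G m σ z init B (j+1)) then 1 else 0)) := by
      refine ENNReal.tsum_le_tsum fun w => ?_
      have hterm : unifC (V := V) h (gu w) * (πR h w *
          (if (h ++ [ccStep G p (gu w) w]) ∈
            (CapS init ∪ LowS G m σ z init B (j+1)) then 1 else 0)) = N⁻¹ * πR h w := by
        rw [if_pos (hmem w), mul_one, unifC_apply]
      rw [← hterm]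
      exact ENNReal.le_tsum (gu w)
    _ = ∑' u, ∑' w, unifC (V := V) h u * (πR h w *
        (if (h ++ [ccStep G p u w]) ∈
          (CapS init ∪ LowS G m σ z init B (j+1)) then 1 else 0)) := ENNReal.tsum_comm
    _ = ∑' u, unifC (V := V) h u * ∑' w, πR h w *
        (if (h ++ [ccStep G p u w]) ∈
          (CapS init ∪ LowS G m σ z init B (j+1)) then 1 else 0) := by
      refine tsum_congr fun u => ?_
      rw [ENNReal.tsum_mul_left]

include hσ0 hσm hL1 hst in
/-- The main one-round inequality. -/
lemma step_bound (πR : CCRob V 1) (init : PosK V 1) (B : ℕ) (t j : ℕ) :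
    (ccPlay G (unifC (V := V)) πR init t).toOuterMeasure (CapS init)
      + (↑(Fintype.card (Fin 1 → V)) : ℝ≥0∞)⁻¹ *
        (ccPlay G (unifC (V := V)) πR init t).toOuterMeasure (LowS G m σ z init B j)
    ≤ (ccPlay G (unifC (V := V)) πR init (t+1)).toOuterMeasure (CapS init)
      + (ccPlay G (unifC (V := V)) πR init (t+1)).toOuterMeasure
          (LowS G m σ z init B (j+1)) := by
  set N : ℝ≥0∞ := (↑(Fintype.card (Fin 1 → V)) : ℝ≥0∞) with hN
  set μ := ccPlay G (unifC (V := V)) πR init t with hμ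
  rw [ccPlay_succ_meas πR init t (CapS init),
    ccPlay_succ_meas πR init t (LowS G m σ z init B (j+1)),
    PMF.toOuterMeasure_apply, PMF.toOuterMeasure_apply, ENNReal.tsum_mul_left.symm,
    ← ENNReal.tsum_add, ← ENNReal.tsum_add]
  refine ENNReal.tsum_le_tsum fun h => ?_
  by_cases hcap : h ∈ CapS init
  · -- captured histories stay captured
    have hall : ∀ (u : Fin 1 → V) (w : V),
        h ++ [ccStep G (h.getLast?.getD init) u w] ∈ CapS init := by
      intro u w
      have habs : ccStep G (h.getLast?.getD init) u w = h.getLast?.getD init := by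
        unfold ccStep
        rw [if_pos ⟨0, hcap⟩]
      show ((h ++ [ccStep G (h.getLast?.getD init) u w]).getLast?.getD init).1 0 = _
      rw [List.getLast?_concat]
      show (ccStep G (h.getLast?.getD init) u w).1 0 = (ccStep G (h.getLast?.getD init) u w).2
      rw [habs]
      exact hcap
    have h1 : (1:ℝ≥0∞) ≤ ∑' u, unifC (V := V) h u * ∑' w, πR h w *
        (if (h ++ [ccStep G (h.getLast?.getD init) u w]) ∈ CapS init then 1 else 0) :=
      inner_all hall
    have hlow0 : (LowS G m σ z init B j).indicator (⇑μ) h = 0 := by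
      rw [Set.indicator_of_notMem]
      intro hmem
      exact hmem.1 hcap
    rw [Set.indicator_of_mem hcap, hlow0, mul_zero, add_zero]
    calc μ h = μ h * 1 := (mul_one _).symm
      _ ≤ μ h * (∑' u, unifC (V := V) h u * ∑' w, πR h w *
          (if (h ++ [ccStep G (h.getLast?.getD init) u w]) ∈ CapS init then 1 else 0)) :=
        mul_le_mul_right h1 _
      _ ≤ _ := le_add_right le_rfl
  · by_cases hlow : h ∈ LowS G m σ z init B j
    · -- free low histories: good draw
      have hfree : (h.getLast?.getD init).1 0 ≠ (h.getLast?.getD init).2 := hlow.1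
      have hgood := inner_good hσ0 hσm hL1 hst (πR := πR) (init := init) (h := h)
        (B := B) (j := j) hfree hlow.2
      rw [Set.indicator_of_notMem hcap, Set.indicator_of_mem hlow, zero_add]
      -- split the union indicator
      have hsplit : ∀ (u : Fin 1 → V) (w : V),
          (if (h ++ [ccStep G (h.getLast?.getD init) u w]) ∈
            (CapS init ∪ LowS G m σ z init B (j+1)) then (1:ℝ≥0∞) else 0) ≤
          (if (h ++ [ccStep G (h.getLast?.getD init) u w]) ∈ CapS init then 1 else 0) +
          (if (h ++ [ccStep G (h.getLast?.getD init) u w]) ∈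
            LowS G m σ z init B (j+1) then 1 else 0) := by
        intro u w
        by_cases hm : (h ++ [ccStep G (h.getLast?.getD init) u w]) ∈
            (CapS init ∪ LowS G m σ z init B (j+1))
        · rw [if_pos hm]
          rcases hm with hm | hm
          · rw [if_pos hm]
            exact le_self_add
          · rw [if_pos hm]
            exact le_add_self
        · rw [if_neg hm]
          exact zero_le
      have hub : ∑' u, unifC (V := V) h u * ∑' w, πR h w *
          (if (h ++ [ccStep G (h.getLast?.getD init) u w]) ∈
            (CapS init ∪ LowS G m σ z init B (j+1)) then 1 else 0) ≤
          (∑' u, unifC (V := V) h u * ∑' w, πR h w *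
            (if (h ++ [ccStep G (h.getLast?.getD init) u w]) ∈ CapS init then 1 else 0)) +
          (∑' u, unifC (V := V) h u * ∑' w, πR h w *
            (if (h ++ [ccStep G (h.getLast?.getD init) u w]) ∈
              LowS G m σ z init B (j+1) then 1 else 0)) := by
        rw [← ENNReal.tsum_add]
        refine ENNReal.tsum_le_tsum fun u => ?_
        rw [← mul_add]
        refine mul_le_mul_right ?_ _
        rw [← ENNReal.tsum_add]
        refine ENNReal.tsum_le_tsum fun w => ?_
        rw [← mul_add]
        exact mul_le_mul_right (hsplit u w) _
      calc N⁻¹ * μ h = μ h * N⁻¹ := mul_comm _ _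
        _ ≤ μ h * ((∑' u, unifC (V := V) h u * ∑' w, πR h w *
            (if (h ++ [ccStep G (h.getLast?.getD init) u w]) ∈ CapS init then 1 else 0)) +
            (∑' u, unifC (V := V) h u * ∑' w, πR h w *
              (if (h ++ [ccStep G (h.getLast?.getD init) u w]) ∈
                LowS G m σ z init B (j+1) then 1 else 0))) :=
          mul_le_mul_right (le_trans hgood hub) _
        _ = _ := mul_add _ _ _
    · rw [Set.indicator_of_notMem hcap, Set.indicator_of_notMem hlow, mul_zero, add_zero]
      exact zero_le

include hσ0 hσm hL1 hst in
/-- Captured mass is monotone. -/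
lemma cap_mono (πR : CCRob V 1) (init : PosK V 1) (t : ℕ) :
    (ccPlay G (unifC (V := V)) πR init t).toOuterMeasure (CapS init)
    ≤ (ccPlay G (unifC (V := V)) πR init (t+1)).toOuterMeasure (CapS init) := by
  rw [ccPlay_succ_meas πR init t (CapS init), PMF.toOuterMeasure_apply]
  refine ENNReal.tsum_le_tsum fun h => ?_
  by_cases hcap : h ∈ CapS init
  · have hall : ∀ (u : Fin 1 → V) (w : V),
        h ++ [ccStep G (h.getLast?.getD init) u w] ∈ CapS init := by
      intro u w
      have habs : ccStep G (h.getLast?.getD init) u w = h.getLast?.getD init := by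
        unfold ccStep
        rw [if_pos ⟨0, hcap⟩]
      show ((h ++ [ccStep G (h.getLast?.getD init) u w]).getLast?.getD init).1 0 = _
      rw [List.getLast?_concat]
      show (ccStep G (h.getLast?.getD init) u w).1 0 = (ccStep G (h.getLast?.getD init) u w).2
      rw [habs]
      exact hcap
    rw [Set.indicator_of_mem hcap]
    calc (ccPlay G (unifC (V := V)) πR init t) h
        = (ccPlay G (unifC (V := V)) πR init t) h * 1 := (mul_one _).symm
      _ ≤ _ := mul_le_mul_right (inner_all hall) _
  · rw [Set.indicator_of_notMem hcap]
    exact zero_le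

end Prob

end CCAux
namespace CCAux

open scoped Classical ENNReal

variable (G : SimpleGraph V) [DecidableRel G.Adj]

theorem unif_wins [Nonempty V] (hconn : G.Connected) (hwin : tbCopWin G 1) :
    ∀ (init : PosK V 1) (πR : CCRob V 1),
      (⨅ t : ℕ, ccFreeProb G (unifC (V := V)) πR init t) = 0 := by
  obtain ⟨sc, hsc⟩ := hwin
  have htot := tot_univ G sc hsc
  have hd : Dism G Finset.univ :=
    dism_of_tot G Finset.univ ⟨sc.1 0, Finset.mem_univ _, fun r _ => htot r⟩
  obtain ⟨m, σ, z, hzA, hσ0u, hσmu, hL1u⟩ := ladder_of_dism G hd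
  have hσ0 : ∀ r : V, σ 0 r = z := fun r => hσ0u r (Finset.mem_univ r)
  have hσm : ∀ r : V, σ m r = r := fun r => hσmu r (Finset.mem_univ r)
  have hL1 : ∀ k, k < m → ∀ r w : V, w ∈ nbhd G r → σ (k+1) w ∈ nbhd G (σ k r) :=
    fun k hk r w hw => hL1u k hk r (Finset.mem_univ r) w hw (Finset.mem_univ w)
  have hstep : ∀ c : V, c ≠ z → ∃ c', G.Adj c c' ∧ G.dist c' z < G.dist c z := by
    intro c hc
    obtain ⟨wlk, hwlk⟩ := hconn.exists_walk_length_eq_dist c z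
    cases wlk with
    | nil => exact absurd rfl hc
    | @cons _ b _ hadj rest =>
      refine ⟨b, hadj, ?_⟩
      have h1 : G.dist b z ≤ rest.length := SimpleGraph.dist_le rest
      rw [SimpleGraph.Walk.length_cons] at hwlk
      omega
  set st : V → V := fun c => if hc : c = z then z else (hstep c hc).choose with hstdef
  have hst : ∀ c : V, c ≠ z → G.Adj c (st c) ∧ G.dist (st c) z < G.dist c z := by
    intro c hc
    rw [hstdef]
    dsimp only
    rw [dif_neg hc]
    exact (hstep c hc).choose_spec
  intro init πR
  set N : ℝ≥0∞ := (↑(Fintype.card (Fin 1 → V)) : ℝ≥0∞) with hNdef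
  have hN1 : 1 ≤ N := by
    rw [hNdef]
    exact_mod_cast Nat.one_le_iff_ne_zero.2 Fintype.card_ne_zero
  have hNinv1 : N⁻¹ ≤ 1 := ENNReal.inv_le_one.2 hN1
  have hNinv0 : N⁻¹ ≠ 0 := ENNReal.inv_ne_zero.2 (by rw [hNdef]; exact ENNReal.natCast_ne_top _)
  set B : ℕ := m + 1 + Finset.univ.sup (fun c => G.dist c z) with hBdef
  set f : ℕ → ℝ≥0∞ := fun t => ccFreeProb G (unifC (V := V)) πR init t with hfdef
  set a : ℕ → ℝ≥0∞ := fun t =>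
    (ccPlay G (unifC (V := V)) πR init t).toOuterMeasure (CapS init) with hadef
  set b : ℕ → ℕ → ℝ≥0∞ := fun t j =>
    (ccPlay G (unifC (V := V)) πR init t).toOuterMeasure (LowS G m σ z init B j) with hbdef
  have hFreeCompl : ∀ t, f t =
      (ccPlay G (unifC (V := V)) πR init t).toOuterMeasure ((CapS init)ᶜ) := by
    intro t
    rw [hfdef]
    show (ccPlay G (unifC (V := V)) πR init t).toOuterMeasure _ = _
    congr 1
    ext x
    constructor
    · intro hh
      exact hh 0
    · intro hh i
      rw [Subsingleton.elim i 0]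
      exact hh
  have hsum1 : ∀ t, a t + f t = 1 := by
    intro t
    rw [hFreeCompl]
    exact pmf_compl _ _
  have hlow0 : ∀ t, b t 0 = f t := by
    intro t
    rw [hbdef, hFreeCompl]
    dsimp only
    congr 1
    ext x
    simp only [LowS, CapS, Set.mem_setOf_eq, Set.mem_compl_iff, add_zero]
    constructor
    · intro hh; exact hh.1
    · intro hh
      refine ⟨hh, ?_⟩
      rw [hBdef]
      exact psi_le
  have hlowB : ∀ t, b t B = 0 := by
    intro t
    rw [hbdef]
    dsimp only
    have he : LowS G m σ z init B B = ∅ := by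
      ext x
      simp only [LowS, Set.mem_setOf_eq, Set.mem_empty_iff_false, iff_false, not_and]
      intro hfree
      have := psi_pos (G := G) (m := m) (σ := σ) (z := z) hfree
      omega
    rw [he]
    exact MeasureTheory.measure_empty
  have hamono : ∀ t j, a t ≤ a (t + j) := by
    intro t j
    induction j with
    | zero => exact le_rfl
    | succ j ih => exact le_trans ih (cap_mono hσ0 hσm hL1 hst πR init (t + j))
  have hconv : ∀ x y x' y' : ℝ≥0∞, x' ≤ x → x' + y' ≤ x + y → x' + N⁻¹ * y' ≤ x + N⁻¹ * y := by
    intro x y x' y' hx hxy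
    have hid : ∀ u v : ℝ≥0∞, u + N⁻¹ * v = (1 - N⁻¹) * u + N⁻¹ * (u + v) := by
      intro u v
      rw [mul_add, ← add_assoc, ← add_mul, tsub_add_cancel_of_le hNinv1, one_mul]
    rw [hid x y, hid x' y']
    exact add_le_add (mul_le_mul_right hx _) (mul_le_mul_right hxy _)
  have hkey : ∀ t j, a t + N⁻¹ ^ j * f t ≤ a (t + j) + b (t + j) j := by
    intro t j
    induction j with
    | zero =>
      rw [pow_zero, one_mul, Nat.add_zero, hlow0 t]
    | succ j ih =>
      have hstepb := step_bound hσ0 hσm hL1 hst πR init B (t + j) j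
      have h1 : a t + N⁻¹ ^ (j+1) * f t ≤ a (t + j) + N⁻¹ * b (t + j) j := by
        have := hconv (a (t + j)) (b (t + j) j) (a t) (N⁻¹ ^ j * f t) (hamono t j) ih
        calc a t + N⁻¹ ^ (j+1) * f t = a t + N⁻¹ * (N⁻¹ ^ j * f t) := by
              rw [pow_succ, mul_comm (N⁻¹ ^ j) N⁻¹, mul_assoc]
          _ ≤ a (t + j) + N⁻¹ * b (t + j) j := this
      refine le_trans h1 ?_
      have : t + (j + 1) = (t + j) + 1 := by omega
      rw [this]
      exact hstepb
  have hcontract : ∀ t, f (t + B) + N⁻¹ ^ B * f t ≤ f t := by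
    intro t
    have h1 : a t + N⁻¹ ^ B * f t ≤ a (t + B) := by
      have := hkey t B
      rwa [hlowB (t + B), add_zero] at this
    have h2 : f (t + B) + (a t + N⁻¹ ^ B * f t) ≤ f (t + B) + a (t + B) :=
      add_le_add_right h1 _
    have h3 : f (t + B) + a (t + B) = 1 := by rw [add_comm]; exact hsum1 (t + B)
    have h4 : f (t + B) + (a t + N⁻¹ ^ B * f t) ≤ f t + a t := by
      rw [h3] at h2
      rw [← hsum1 t] at h2
      rwa [add_comm (a t) (f t)] at h2
    have hatop : a t ≠ ⊤ := by
      refine ne_top_of_le_ne_top ENNReal.one_ne_top ?_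
      rw [← hsum1 t]
      exact le_self_add
    rw [show f (t + B) + (a t + N⁻¹ ^ B * f t) = (f (t + B) + N⁻¹ ^ B * f t) + a t by ring,
      show f t + a t = f t + a t from rfl] at h4
    exact (ENNReal.add_le_add_iff_right hatop).1 h4
  -- the infimum is zero
  set L : ℝ≥0∞ := ⨅ t, f t with hLdef
  have hLle : ∀ t, L ≤ f t := fun t => iInf_le _ t
  have hLone : L ≤ 1 := by
    refine le_trans (hLle 0) ?_
    rw [← hsum1 0]
    exact le_add_self
  have hLtop : L ≠ ⊤ := ne_top_of_le_ne_top ENNReal.one_ne_top hLone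
  have h2 : ∀ t, L + N⁻¹ ^ B * L ≤ f t := by
    intro t
    refine le_trans ?_ (hcontract t)
    exact add_le_add (hLle (t + B)) (mul_le_mul_right (hLle t) _)
  have h3 : L + N⁻¹ ^ B * L ≤ L := le_iInf h2
  have h4 : N⁻¹ ^ B * L ≤ 0 := by
    have h3' : L + N⁻¹ ^ B * L ≤ L + 0 := by
      rw [add_zero]
      exact h3
    exact (ENNReal.add_le_add_iff_left hLtop).1 h3'
  have h5 : N⁻¹ ^ B * L = 0 := le_antisymm h4 (zero_le)
  have hδ : N⁻¹ ^ B ≠ 0 := pow_ne_zero _ hNinv0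
  have : L = 0 := by
    rcases mul_eq_zero.1 h5 with h | h
    · exact absurd h hδ
    · exact h
  exact this

end CCAux

/-- if `c(G) = 1` then `c̃(G) = 1`; moreover there is a memoryless
randomized cop strategy under which, for every initial position and every robber
strategy in the concurrent game, capture occurs with probability one. -/
theorem ccopNumber_eq_one_of_copNumber_eq_one (G : SimpleGraph V) [DecidableRel G.Adj]
    (hconn : G.Connected) (h : copNumber G = 1) :
    ccopNumber G = 1 ∧
      ∃ πC : CCCop V 1, MemorylessK πC ∧
        ∀ init : PosK V 1, ∀ πR : CCRob V 1,
          (⨅ t : ℕ, ccFreeProb G πC πR init t) = 0 := by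
  haveI : Nonempty V := hconn.nonempty
  have hne : {K | tbCopWin G K}.Nonempty := by
    by_contra hcon
    rw [Set.not_nonempty_iff_eq_empty] at hcon
    rw [copNumber, hcon, Nat.sInf_empty] at h
    exact one_ne_zero h.symm
  have h1 : tbCopWin G 1 := by
    have hmem := Nat.sInf_mem hne
    rw [copNumber] at h
    rw [h] at hmem
    exact hmem
  have hwin1 := CCAux.unif_wins G hconn h1
  have hccwin : ccCopWin G 1 := ⟨CCAux.unifC (V := V), hwin1⟩
  constructor
  · have hnot0 : ¬ ccCopWin G 0 := by
      rintro ⟨πC0, hwin0⟩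
      set init0 : PosK V 0 := (Fin.elim0, Classical.arbitrary V) with hinit0
      set πR0 : CCRob V 0 := fun _ => PMF.pure (Classical.arbitrary V) with hπR0
      have hall : ∀ t, ccFreeProb G πC0 πR0 init0 t = 1 := by
        intro t
        show PMF.toOuterMeasure _ _ = 1
        have huniv : {h : List (PosK V 0) |
            ∀ i, (h.getLast?.getD init0).1 i ≠ (h.getLast?.getD init0).2} = Set.univ := by
          ext x
          simp only [Set.mem_setOf_eq, Set.mem_univ, iff_true]
          intro i
          exact i.elim0
        rw [huniv, PMF.toOuterMeasure_apply]
        rw [tsum_congr fun x => congrFun (Set.indicator_univ (M := ENNReal) _) x]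
        exact PMF.tsum_coe _
      have hzero := hwin0 init0 πR0
      rw [iInf_congr hall] at hzero
      simp at hzero
    have hmem1 : (1 : ℕ) ∈ {K | ccCopWin G K} := hccwin
    have hge : 1 ≤ sInf {K | ccCopWin G K} := by
      rcases Nat.eq_zero_or_pos (sInf {K | ccCopWin G K}) with h0 | hpos
      · have := Nat.sInf_mem (⟨1, hmem1⟩ : {K | ccCopWin G K}.Nonempty)
        rw [h0] at this
        exact absurd this hnot0
      · exact hpos
    exact le_antisymm (Nat.sInf_le hmem1) hge
  · exact ⟨CCAux.unifC (V := V), fun _ _ _ => rfl, hwin1⟩
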